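/- Let K be a positive integer, Δx := 2π/K, and T > 0. Let ḡ : ℝ^K → ℝ^K be continuous and f̄ : ℝ^K → ℝ^K be continuously differentiable (components indexed by ℤ/Kℤ). Let u : [0,T) → ℝ^K be differentiable with derivative u̇, satisfying ∑_{k=1}^{K} f̄_k(u(0)) = 0, ∑_{j=1}^{K} ∑_{k=1}^{K} (∂f̄_j/∂v_k)(u(t)) ≠ 0 for all t ∈ [0,T), and the integral-form scheme: for all t ∈ [0,T) and all k, u̇_k(t) + ḡ_k(u(t)) = (δ_FD^{-1} f̄(u(t)))_k + 𝒞_d(u(t)). Then u also satisfies the average-difference scheme: for all t ∈ [0,T) and all k ∈ ℤ/Kℤ, (u̇_{k+1}(t) + ḡ_{k+1}(u(t)) − u̇_k(t) − ḡ_k(u(t)))/Δx = (f̄_{k+1}(u(t)) + f̄_k(u(t)))/2. -/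

import Mathlib

open Real Finset

/-- The trapezoidal partial sum `Δx(v₀/2 + ∑_{i=1}^{n−1} vᵢ + vₙ/2)` (with `Δx = 2π/K`
and periodic indexing, so that `v₀ = v_K`). -/
noncomputable def partialTrap (K : ℕ) (v : ZMod K → ℝ) (n : ℕ) : ℝ :=
  (2 * π / K) * (v 0 / 2 + (∑ i ∈ Finset.Ico 1 n, v (i : ZMod K)) + v (n : ZMod K) / 2)

/-- The trapezoidal antiderivative `δ_FD⁻¹`: for `k = 1,…,K` (periodic indexing),
`(δ_FD⁻¹v)_k = Δx(v₀/2 + ∑_{i=1}^{k−1} vᵢ + v_k/2) −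
(Δx²/(2π)) ∑_{i=1}^{K} (v₀/2 + ∑_{j=1}^{i−1} vⱼ + vᵢ/2)`. -/
noncomputable def deltaFDinv (K : ℕ) (v : ZMod K → ℝ) (k : ZMod K) : ℝ :=
  partialTrap K v (if k.val = 0 then K else k.val) -
    (1 / (2 * π)) * (2 * π / K) * ∑ i ∈ Finset.Icc 1 K, partialTrap K v i

/-- The discrete constant `𝒞_d(v)`, determined from the discrete implicit constraint:
`𝒞_d(v) = [∑_{j,k} (∂f̄ⱼ/∂v_k)(v)(ḡ_k(v) − (δ_FD⁻¹f̄(v))_k)] / [∑_{j,k} (∂f̄ⱼ/∂v_k)(v)]`. -/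
noncomputable def Cd (K : ℕ) [NeZero K]
    (fbar gbar : (ZMod K → ℝ) → ZMod K → ℝ) (v : ZMod K → ℝ) : ℝ :=
  (∑ j : ZMod K, ∑ k : ZMod K,
      fderiv ℝ (fun z => fbar z j) v (Pi.single k 1) * (gbar v k - deltaFDinv K (fbar v) k)) /
    (∑ j : ZMod K, ∑ k : ZMod K, fderiv ℝ (fun z => fbar z j) v (Pi.single k 1))

lemma sum_range_zmod (K : ℕ) [NeZero K] (v : ZMod K → ℝ) :
    ∑ i ∈ Finset.range K, v (i : ZMod K) = ∑ k : ZMod K, v k := by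
  refine Finset.sum_nbij' (fun i => (i : ZMod K)) (fun k => k.val) ?_ ?_ ?_ ?_ ?_
  · intro a _; exact Finset.mem_univ _
  · intro a _; exact Finset.mem_range.2 (ZMod.val_lt a)
  · intro a ha; exact ZMod.val_cast_of_lt (Finset.mem_range.1 ha)
  · intro a _; exact ZMod.natCast_zmod_val a
  · intro a _; rfl

lemma deltaFDinv_succ_sub (K : ℕ) [NeZero K] (v : ZMod K → ℝ)
    (hv : ∑ k : ZMod K, v k = 0) (k : ZMod K) :
    deltaFDinv K v (k + 1) - deltaFDinv K v k = (2 * π / K) * ((v (k + 1) + v k) / 2) := by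
  have hK : 0 < K := Nat.pos_of_ne_zero (NeZero.ne K)
  unfold deltaFDinv
  rw [show ∀ a b c : ℝ, a - c - (b - c) = a - b from fun a b c => by ring]
  rcases Nat.eq_zero_or_pos k.val with h0 | hpos
  · -- k = 0 case
    have hk : k = 0 := (ZMod.val_eq_zero k).1 h0
    subst hk
    have hidx1 : (if ((0:ZMod K) + 1).val = 0 then K else ((0:ZMod K) + 1).val) = 1 := by
      by_cases hc : ((0:ZMod K) + 1).val = 0
      · have h1 : ((1:ℕ) : ZMod K) = 0 := by
          rw [Nat.cast_one]
          simpa using (ZMod.val_eq_zero _).1 hc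
        have hd : K ∣ 1 := (ZMod.natCast_eq_zero_iff 1 K).1 h1
        rw [if_pos hc]
        exact Nat.dvd_one.1 hd
      · have hK1 : 1 < K := by
          rcases Nat.lt_or_ge 1 K with h | h
          · exact h
          · exfalso; apply hc
            have hK1' : K = 1 := le_antisymm h hK
            subst hK1'
            exact (ZMod.val_eq_zero _).2 (Subsingleton.elim _ _)
        have hv1 : ((0:ZMod K) + 1).val = 1 := by
          rw [zero_add, show (1 : ZMod K) = ((1:ℕ) : ZMod K) by push_cast; rfl,
            ZMod.val_cast_of_lt hK1]
        rw [if_neg hc]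
        exact hv1
    rw [hidx1, if_pos h0]
    have hsum : ∑ i ∈ Finset.Ico 1 K, v (i : ZMod K) = - v 0 := by
      have h1 : ∑ i ∈ Finset.range K, v (i : ZMod K) = 0 := by
        rw [sum_range_zmod]; exact hv
      rw [Finset.range_eq_Ico, Finset.sum_eq_sum_Ico_succ_bot hK] at h1
      push_cast at h1 ⊢
      linarith
    unfold partialTrap
    rw [hsum]
    have hKv : ((K : ℕ) : ZMod K) = 0 := ZMod.natCast_self K
    simp only [Finset.Ico_self, Finset.sum_empty, hKv, Nat.cast_one]
    push_cast
    ring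
  · -- k.val ≥ 1 case
    set m := k.val with hm
    have hmK : m < K := ZMod.val_lt k
    have hkm : ((m : ℕ) : ZMod K) = k := ZMod.natCast_zmod_val k
    have hk1 : ((m + 1 : ℕ) : ZMod K) = k + 1 := by push_cast [hkm]; ring
    have hidxk : (if k.val = 0 then K else k.val) = m := by
      rw [if_neg (by omega)]
    have hidx1 : (if (k + 1).val = 0 then K else (k + 1).val) = m + 1 := by
      by_cases hc : (k + 1).val = 0
      · have h1 : ((m + 1 : ℕ) : ZMod K) = 0 := by rw [hk1]; exact (ZMod.val_eq_zero _).1 hc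
        have hdvd : K ∣ m + 1 := (ZMod.natCast_eq_zero_iff _ K).1 h1
        have hKe : K = m + 1 := Nat.le_antisymm (Nat.le_of_dvd (Nat.succ_pos m) hdvd)
          (Nat.succ_le_of_lt hmK)
        rw [if_pos hc]; exact hKe
      · have hlt : m + 1 < K := by
          rcases Nat.lt_or_ge (m+1) K with h | h
          · exact h
          · exfalso; apply hc
            have hKe : K = m + 1 := le_antisymm h (Nat.succ_le_of_lt hmK)
            rw [← hk1, ← hKe, ZMod.natCast_self]
            exact ZMod.val_zero
        have hvv : (k + 1).val = m + 1 := by rw [← hk1, ZMod.val_cast_of_lt hlt]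
        rw [if_neg hc]; exact hvv
    rw [hidxk, hidx1]
    unfold partialTrap
    rw [Finset.sum_Ico_succ_top hpos, hkm, hk1]
    ring

/-- A solution of the integral-form scheme
`u̇_k + ḡ_k(u) = (δ_FD⁻¹f̄(u))_k + 𝒞_d(u)` on `[0,T)` with `∑_k f̄_k(u(0)) = 0` and
satisfying the nondegeneracy condition `∑_{j,k} (∂f̄ⱼ/∂v_k)(u(t)) ≠ 0` also solves the
average-difference scheme `δ⁺ₓ(u̇_k + ḡ_k(u)) = μ⁺ₓ f̄_k(u)`. -/
theorem integral_form_to_averageDifference (K : ℕ) [NeZero K] (T : ℝ) (hT : 0 < T)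
    (gbar fbar : (ZMod K → ℝ) → ZMod K → ℝ)
    (hg : Continuous gbar) (hf : ContDiff ℝ 1 fbar)
    (u udot : ℝ → ZMod K → ℝ)
    (hderiv : ∀ t ∈ Set.Ico (0:ℝ) T, ∀ k : ZMod K,
      HasDerivWithinAt (fun s => u s k) (udot t k) (Set.Ico (0:ℝ) T) t)
    (h0 : (∑ k : ZMod K, fbar (u 0) k) = 0)
    (hnd : ∀ t ∈ Set.Ico (0:ℝ) T,
      (∑ j : ZMod K, ∑ k : ZMod K,
        fderiv ℝ (fun z => fbar z j) (u t) (Pi.single k 1)) ≠ 0)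
    (hscheme : ∀ t ∈ Set.Ico (0:ℝ) T, ∀ k : ZMod K,
      udot t k + gbar (u t) k = deltaFDinv K (fbar (u t)) k + Cd K fbar gbar (u t)) :
    ∀ t ∈ Set.Ico (0:ℝ) T, ∀ k : ZMod K,
      (udot t (k + 1) + gbar (u t) (k + 1) - udot t k - gbar (u t) k) / (2 * π / K) =
        (fbar (u t) (k + 1) + fbar (u t) k) / 2 := by
  have hK : 0 < K := Nat.pos_of_ne_zero (NeZero.ne K)
  have hKne : ((K:ℝ)) ≠ 0 := by exact_mod_cast hK.ne'
  set s : Set ℝ := Set.Ico (0:ℝ) T with hs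
  have hSderiv : ∀ t ∈ s, HasDerivWithinAt (fun r => ∑ j : ZMod K, fbar (u r) j) 0 s t := by
    intro t ht
    have hu : HasDerivWithinAt u (udot t) s t := hasDerivWithinAt_pi.2 (hderiv t ht)
    have hcomp : ∀ j : ZMod K, HasDerivWithinAt (fun r => fbar (u r) j)
        (∑ k : ZMod K, udot t k * fderiv ℝ (fun z => fbar z j) (u t) (Pi.single k 1)) s t := by
      intro j
      have hdiff : HasFDerivAt (fun z => fbar z j) (fderiv ℝ (fun z => fbar z j) (u t)) (u t) :=
        (((contDiff_pi.mp hf j).differentiable one_ne_zero) (u t)).hasFDerivAt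
      have h1 := hdiff.comp_hasDerivWithinAt t hu
      refine h1.congr_deriv ?_
      symm
      have hud2 : udot t = ∑ k : ZMod K, udot t k • (Pi.single k 1 : ZMod K → ℝ) := by
        funext i
        rw [Finset.sum_apply]
        simp [Pi.single_apply, Finset.sum_ite_eq, Finset.sum_ite_eq']
      rw [show (fderiv ℝ (fun z => fbar z j) (u t)) (udot t) = _ from congrArg _ hud2]
      rw [map_sum]
      exact Finset.sum_congr rfl fun k _ => by rw [map_smul, smul_eq_mul]
    have hsum := HasDerivWithinAt.sum (u := Finset.univ)
      (fun j (_ : j ∈ Finset.univ) => hcomp j)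
    have hud : ∀ k, udot t k
        = deltaFDinv K (fbar (u t)) k + Cd K fbar gbar (u t) - gbar (u t) k := by
      intro k; linarith [hscheme t ht k]
    have hD := hnd t ht
    have hzero : (∑ j : ZMod K, ∑ k : ZMod K,
        udot t k * fderiv ℝ (fun z => fbar z j) (u t) (Pi.single k 1)) = 0 := by
      calc ∑ j : ZMod K, ∑ k : ZMod K,
            udot t k * fderiv ℝ (fun z => fbar z j) (u t) (Pi.single k 1)
          = (∑ j : ZMod K, ∑ k : ZMod K, fderiv ℝ (fun z => fbar z j) (u t) (Pi.single k 1) *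
              (gbar (u t) k - deltaFDinv K (fbar (u t)) k)) * (-1)
            + Cd K fbar gbar (u t) *
              (∑ j : ZMod K, ∑ k : ZMod K,
                fderiv ℝ (fun z => fbar z j) (u t) (Pi.single k 1)) := by
            rw [Finset.sum_mul, Finset.mul_sum, ← Finset.sum_add_distrib]
            refine Finset.sum_congr rfl fun j _ => ?_
            rw [Finset.sum_mul, Finset.mul_sum, ← Finset.sum_add_distrib]
            refine Finset.sum_congr rfl fun k _ => ?_
            rw [hud k]; ring
        _ = 0 := by rw [Cd, div_mul_cancel₀ _ hD]; ring
    have hsum' : HasDerivWithinAt (fun r => ∑ j : ZMod K, fbar (u r) j) _ s t :=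
      hsum.congr (fun r _ => by simp [Finset.sum_apply]) (by simp [Finset.sum_apply])
    exact hzero ▸ hsum'
  have hcons : ∀ t ∈ s, ∑ j : ZMod K, fbar (u t) j = 0 := by
    intro t ht
    have hconv : Convex ℝ s := convex_Ico 0 T
    have hdiff : DifferentiableOn ℝ (fun r => ∑ j : ZMod K, fbar (u r) j) s :=
      fun x hx => (hSderiv x hx).differentiableWithinAt
    have hzero : ∀ x ∈ s, fderivWithin ℝ (fun r => ∑ j : ZMod K, fbar (u r) j) s x = 0 := by
      intro x hx
      have h2 := (hSderiv x hx).hasFDerivWithinAt.fderivWithin ((uniqueDiffOn_Ico 0 T) x hx)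
      rw [h2]
      ext y
      simp
    have h0' : (0:ℝ) ∈ s := ⟨le_refl 0, hT⟩
    have hc := hconv.is_const_of_fderivWithin_eq_zero hdiff hzero ht h0'
    rw [hc, h0]
  intro t ht k
  have h1 := hscheme t ht k
  have h2 := hscheme t ht (k + 1)
  have hkey := deltaFDinv_succ_sub K (fbar (u t)) (hcons t ht) k
  have h3 : udot t (k + 1) + gbar (u t) (k + 1) - udot t k - gbar (u t) k
      = 2 * π / (K:ℝ) * ((fbar (u t) (k + 1) + fbar (u t) k) / 2) := by linarith
  rw [h3]
  field_simp
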